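/- Assume α = 2πp/q where p, q are positive integers with gcd(p, q) = 1. Let V be a connected component of the regular set 𝓤 and let z ∈ V. Then V equals the set of all points of 𝓤 having the same itinerary as z, namely V = {w ∈ 𝓤 : for every integer n ≥ 0, Im(Fⁿ(w)) > 0 ↔ Im(Fⁿ(z)) > 0}; in particular, every connected component of 𝓤 is convex. -/

import Mathlib

noncomputable def Hfun (z : ℂ) : ℂ := if 0 ≤ z.im then 1 else -1

noncomputable def Fmap (α : ℝ) (z : ℂ) : ℂ := Complex.exp (α * Complex.I) * (z - Hfun z)

def critSet (α : ℝ) : Set ℂ := {z : ℂ | ∃ n : ℕ, ((Fmap α)^[n] z).im = 0}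

def regSet (α : ℝ) : Set ℂ := (closure (critSet α))ᶜ

lemma abs_lam (α : ℝ) : ‖Complex.exp (α * Complex.I)‖ = 1 := by
  rw [Complex.norm_exp]; simp

lemma sign_iff_of_close {a b : ℝ} (h : |a - b| < |b|) : (0 ≤ a ↔ 0 ≤ b) := by
  rcases le_or_gt 0 b with hb | hb
  · rw [abs_of_nonneg hb] at h
    have h2 := abs_sub_lt_iff.1 h
    constructor <;> intro _ <;> linarith [h2.1, h2.2]
  · rw [abs_of_neg hb] at h
    have h2 := abs_sub_lt_iff.1 h
    constructor <;> intro _ <;> linarith [h2.1, h2.2]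

lemma pos_iff_of_le_iff {a b : ℝ} (h : 0 ≤ a ↔ 0 ≤ b) (ha : a ≠ 0) (hb : b ≠ 0) :
    (0 < a ↔ 0 < b) := by
  constructor <;> intro hx
  · exact lt_of_le_of_ne (h.1 hx.le) (Ne.symm hb)
  · exact lt_of_le_of_ne (h.2 hx.le) (Ne.symm ha)


lemma Fmap_eq_pos (α : ℝ) {x : ℂ} (h : 0 ≤ x.im) :
    Fmap α x = Complex.exp (α * Complex.I) * (x - 1) := by
  unfold Fmap Hfun; rw [if_pos h]

lemma Fmap_eq_neg (α : ℝ) {x : ℂ} (h : ¬ 0 ≤ x.im) :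
    Fmap α x = Complex.exp (α * Complex.I) * (x - (-1)) := by
  unfold Fmap Hfun; rw [if_neg h]

lemma iter_shadow (α : ℝ) (z y : ℂ) :
    ∀ n : ℕ, (∀ k < n, ‖y - z‖ < |((Fmap α)^[k] z).im|) →
    (Fmap α)^[n] y = (Fmap α)^[n] z + (Complex.exp (α * Complex.I))^n * (y - z)
  | 0, _ => by simp
  | (n+1), h => by
    have ih := iter_shadow α z y n (fun k hk => h k (Nat.lt_succ_of_lt hk))
    have hn := h n (Nat.lt_succ_self n)
    have him : |((Fmap α)^[n] y).im - ((Fmap α)^[n] z).im| < |((Fmap α)^[n] z).im| := by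
      rw [ih]
      have he : (((Fmap α)^[n] z + (Complex.exp (α * Complex.I))^n * (y - z)).im
          - ((Fmap α)^[n] z).im) = ((Complex.exp (α * Complex.I))^n * (y - z)).im := by
        simp
      rw [he]
      calc |((Complex.exp (α * Complex.I))^n * (y - z)).im|
          ≤ ‖(Complex.exp (α * Complex.I))^n * (y - z)‖ :=
            Complex.abs_im_le_norm _
        _ = ‖y - z‖ := by
            rw [norm_mul, norm_pow, abs_lam]; ring
        _ < _ := hn
    have hsign : (0 ≤ ((Fmap α)^[n] y).im) ↔ (0 ≤ ((Fmap α)^[n] z).im) :=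
      sign_iff_of_close him
    rw [Function.iterate_succ_apply', Function.iterate_succ_apply']
    by_cases hc : 0 ≤ ((Fmap α)^[n] z).im
    · rw [Fmap_eq_pos α (hsign.2 hc), Fmap_eq_pos α hc, ih]
      ring
    · rw [Fmap_eq_neg α (fun hy => hc (hsign.1 hy)), Fmap_eq_neg α hc, ih]
      ring

lemma reg_ne {α : ℝ} {x : ℂ} (hx : x ∈ regSet α) : ∀ n, ((Fmap α)^[n] x).im ≠ 0 := by
  intro n h
  exact hx (subset_closure ⟨n, h⟩)

lemma gap_of_reg {α : ℝ} {z : ℂ} (hz : z ∈ regSet α) :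
    ∃ δ > 0, ∀ n, δ ≤ |((Fmap α)^[n] z).im| := by
  have hop : IsOpen (regSet α) := isClosed_closure.isOpen_compl
  obtain ⟨ε, hε, hball⟩ := Metric.isOpen_iff.1 hop z hz
  refine ⟨ε, hε, ?_⟩
  by_contra hcon
  push_neg at hcon
  classical
  obtain ⟨m, hm⟩ := hcon
  have hex : ∃ n, |((Fmap α)^[n] z).im| < ε := ⟨m, hm⟩
  have hnlt : |((Fmap α)^[Nat.find hex] z).im| < ε := Nat.find_spec hex
  have hmin : ∀ k < Nat.find hex, ε ≤ |((Fmap α)^[k] z).im| :=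
    fun k hk => le_of_not_gt (Nat.find_min hex hk)
  set n := Nat.find hex
  set c : ℝ := ((Fmap α)^[n] z).im with hcdef
  set y : ℂ := z - ((Complex.exp (α*Complex.I))^n)⁻¹ * ((c : ℂ) * Complex.I) with hydef
  have hyz : y - z = -(((Complex.exp (α*Complex.I))^n)⁻¹ * ((c : ℂ) * Complex.I)) := by
    rw [hydef]; ring
  have habs : ‖y - z‖ = |c| := by
    rw [hyz, norm_neg, norm_mul, norm_inv, norm_pow, abs_lam, norm_mul,
        Complex.norm_real, Complex.norm_I]
    simp
  have hsh := iter_shadow α z y n (fun k hk => by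
    rw [habs]; exact lt_of_lt_of_le hnlt (hmin k hk))
  have hne : ((Complex.exp (α*Complex.I))^n) ≠ 0 := pow_ne_zero _ (Complex.exp_ne_zero _)
  have hmul : (Complex.exp (α*Complex.I))^n * (y - z) = -((c : ℂ) * Complex.I) := by
    rw [hyz]
    field_simp
  have him0 : ((Fmap α)^[n] y).im = 0 := by
    rw [hsh, hmul]
    simp [hcdef]
  have hycrit : y ∈ critSet α := ⟨n, him0⟩
  have hyball : y ∈ Metric.ball z ε := by
    rw [Metric.mem_ball, Complex.dist_eq, habs]
    exact hnlt
  exact (hball hyball) (subset_closure hycrit)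

lemma reg_of_gap {α : ℝ} {u : ℂ} {δ : ℝ} (hδ : 0 < δ)
    (h : ∀ n, δ ≤ |((Fmap α)^[n] u).im|) : u ∈ regSet α := by
  simp only [regSet, Set.mem_compl_iff]
  intro hmem
  rw [Metric.mem_closure_iff] at hmem
  obtain ⟨y, hy, hdist⟩ := hmem δ hδ
  obtain ⟨n, hn⟩ := hy
  have habs : ‖y - u‖ < δ := by
    rw [show y - u = -(u - y) by ring, norm_neg, ← Complex.dist_eq]
    exact hdist
  have hsh := iter_shadow α u y n (fun k _ => lt_of_lt_of_le habs (h k))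
  have him : |((Fmap α)^[n] y).im - ((Fmap α)^[n] u).im| < δ := by
    rw [hsh]
    have he : (((Fmap α)^[n] u + (Complex.exp (α * Complex.I))^n * (y - u)).im
        - ((Fmap α)^[n] u).im) = ((Complex.exp (α * Complex.I))^n * (y - u)).im := by simp
    rw [he]
    calc |((Complex.exp (α * Complex.I))^n * (y - u)).im|
        ≤ ‖(Complex.exp (α * Complex.I))^n * (y - u)‖ := Complex.abs_im_le_norm _
      _ = ‖y - u‖ := by rw [norm_mul, norm_pow, abs_lam]; ring
      _ < δ := habs
  rw [hn] at him
  have := h n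
  rw [zero_sub, abs_neg] at him
  linarith

lemma local_same {α : ℝ} {x : ℂ} (hx : x ∈ regSet α) :
    ∃ ε > 0, ∀ y : ℂ, dist y x < ε → y ∈ regSet α ∧
      ∀ m, (0 < ((Fmap α)^[m] y).im ↔ 0 < ((Fmap α)^[m] x).im) := by
  obtain ⟨δ, hδ, hgap⟩ := gap_of_reg hx
  refine ⟨δ/2, by linarith, fun y hy => ?_⟩
  have habs : ‖y - x‖ < δ/2 := by rw [← Complex.dist_eq]; exact hy
  have hsh : ∀ m, (Fmap α)^[m] y
      = (Fmap α)^[m] x + (Complex.exp (α*Complex.I))^m * (y-x) :=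
    fun m => iter_shadow α x y m (fun k _ => lt_of_lt_of_le (by linarith) (hgap k))
  have him : ∀ m, |((Fmap α)^[m] y).im - ((Fmap α)^[m] x).im| < δ/2 := by
    intro m
    rw [hsh m]
    have he : (((Fmap α)^[m] x + (Complex.exp (α * Complex.I))^m * (y - x)).im
        - ((Fmap α)^[m] x).im) = ((Complex.exp (α * Complex.I))^m * (y - x)).im := by simp
    rw [he]
    calc |((Complex.exp (α * Complex.I))^m * (y - x)).im|
        ≤ ‖(Complex.exp (α * Complex.I))^m * (y - x)‖ := Complex.abs_im_le_norm _
      _ = ‖y - x‖ := by rw [norm_mul, norm_pow, abs_lam]; ring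
      _ < δ/2 := habs
  have hylb : ∀ m, δ/2 ≤ |((Fmap α)^[m] y).im| := by
    intro m
    have h1 := him m
    have h2 := hgap m
    have h3 : |((Fmap α)^[m] x).im| - |((Fmap α)^[m] y).im|
        ≤ |((Fmap α)^[m] x).im - ((Fmap α)^[m] y).im| := abs_sub_abs_le_abs_sub _ _
    rw [abs_sub_comm] at h3
    linarith
  refine ⟨reg_of_gap (by linarith) hylb, fun m => ?_⟩
  have hle : (0 ≤ ((Fmap α)^[m] y).im) ↔ (0 ≤ ((Fmap α)^[m] x).im) :=
    sign_iff_of_close (lt_of_lt_of_le (him m) (by linarith [hgap m]))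
  exact pos_iff_of_le_iff hle
    (fun h0 => by simpa [h0] using lt_of_lt_of_le (by linarith : (0:ℝ) < δ/2) (hylb m))
    (fun h0 => by simpa [h0] using lt_of_lt_of_le hδ (hgap m))

lemma comb_pos {a b x y : ℝ} (ha : 0 ≤ a) (hb : 0 ≤ b) (hab : a + b = 1)
    (hx : 0 < x) (hy : 0 < y) : 0 < a*x + b*y := by
  rcases ha.lt_or_eq with h | h
  · have := mul_pos h hx
    have := mul_nonneg hb hy.le
    linarith
  · have hb1 : b = 1 := by linarith
    have hax : a * x = 0 := by rw [← h]; ring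
    rw [hax, hb1]; linarith

lemma real_comb_sign {a b x y d₁ d₂ : ℝ} (ha : 0 ≤ a) (hb : 0 ≤ b) (hab : a + b = 1)
    (hd₁ : 0 < d₁) (hd₂ : 0 < d₂) (hx : d₁ ≤ |x|) (hy : d₂ ≤ |y|)
    (hxy : 0 < x ↔ 0 < y) :
    min d₁ d₂ ≤ |a*x + b*y| ∧ (0 < a*x + b*y ↔ 0 < x) := by
  have hxne : x ≠ 0 := fun h0 => by simp [h0] at hx; linarith
  have hyne : y ≠ 0 := fun h0 => by simp [h0] at hy; linarith
  rcases lt_or_gt_of_ne hxne with hneg | hpos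
  · have hyneg : y < 0 := lt_of_le_of_ne (le_of_not_gt (fun hp => by
      have := hxy.2 hp; linarith)) hyne
    have hx' : d₁ ≤ -x := by rwa [abs_of_neg hneg] at hx
    have hy' : d₂ ≤ -y := by rwa [abs_of_neg hyneg] at hy
    have h1 : a*x + b*y ≤ -(min d₁ d₂) := by
      have ha1 : a * (-x) ≥ a * min d₁ d₂ :=
        mul_le_mul_of_nonneg_left (le_trans (min_le_left _ _) hx') ha
      have hb1 : b * (-y) ≥ b * min d₁ d₂ :=
        mul_le_mul_of_nonneg_left (le_trans (min_le_right _ _) hy') hb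
      have hm : a * min d₁ d₂ + b * min d₁ d₂ = min d₁ d₂ := by
        rw [← add_mul, hab, one_mul]
      linarith
    have hneg2 : a*x + b*y < 0 := lt_of_le_of_lt h1 (by
      have := lt_min hd₁ hd₂; linarith)
    constructor
    · rw [abs_of_neg hneg2]; linarith
    · constructor <;> intro h <;> [linarith; linarith]
  · have hypos : 0 < y := hxy.1 hpos
    have hx' : d₁ ≤ x := by rwa [abs_of_pos hpos] at hx
    have hy' : d₂ ≤ y := by rwa [abs_of_pos hypos] at hy
    have h1 : min d₁ d₂ ≤ a*x + b*y := by
      have ha1 : a * min d₁ d₂ ≤ a * x :=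
        mul_le_mul_of_nonneg_left (le_trans (min_le_left _ _) hx') ha
      have hb1 : b * min d₁ d₂ ≤ b * y :=
        mul_le_mul_of_nonneg_left (le_trans (min_le_right _ _) hy') hb
      have hm : a * min d₁ d₂ + b * min d₁ d₂ = min d₁ d₂ := by
        rw [← add_mul, hab, one_mul]
      linarith
    have hpos2 : 0 < a*x + b*y := lt_of_lt_of_le (lt_min hd₁ hd₂) h1
    constructor
    · rw [abs_of_pos hpos2]; exact h1
    · constructor <;> intro h <;> [exact hpos; exact hpos2]

lemma iter_comb (α : ℝ) (z w : ℂ)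
    (hz : ∀ n, ((Fmap α)^[n] z).im ≠ 0) (hw : ∀ n, ((Fmap α)^[n] w).im ≠ 0)
    (hs : ∀ n, (0 < ((Fmap α)^[n] w).im ↔ 0 < ((Fmap α)^[n] z).im))
    (a b : ℝ) (ha : 0 ≤ a) (hb : 0 ≤ b) (hab : a + b = 1) :
    ∀ n, (Fmap α)^[n] (a • z + b • w) = a • ((Fmap α)^[n] z) + b • ((Fmap α)^[n] w)
  | 0 => by simp
  | (n+1) => by
    have ih := iter_comb α z w hz hw hs a b ha hb hab n
    rw [Function.iterate_succ_apply', Function.iterate_succ_apply',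
        Function.iterate_succ_apply', ih]
    have himz := hz n
    have himw := hw n
    have hiff := hs n
    have himU : (a • ((Fmap α)^[n] z) + b • ((Fmap α)^[n] w)).im
        = a * ((Fmap α)^[n] z).im + b * ((Fmap α)^[n] w).im := by
      simp [Complex.add_im, Complex.smul_im, smul_eq_mul]
    rcases lt_or_gt_of_ne himz with hzneg | hzpos
    · have hwneg : ((Fmap α)^[n] w).im < 0 :=
        lt_of_le_of_ne (le_of_not_gt (fun hp => by have := hiff.1 hp; linarith)) himw
      have hUneg : (a • ((Fmap α)^[n] z) + b • ((Fmap α)^[n] w)).im < 0 := by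
        rw [himU]
        have := comb_pos ha hb hab (neg_pos.2 hzneg) (neg_pos.2 hwneg)
        nlinarith
      rw [Fmap_eq_neg α (not_le.2 hUneg), Fmap_eq_neg α (not_le.2 hzneg),
          Fmap_eq_neg α (not_le.2 hwneg)]
      rw [Complex.real_smul, Complex.real_smul, Complex.real_smul, Complex.real_smul]
      have hab' : (a : ℂ) + (b : ℂ) = 1 := by
        rw [← Complex.ofReal_add, hab]; simp
      have hkey : ((a:ℂ) * (Fmap α)^[n] z + (b:ℂ) * (Fmap α)^[n] w - -1)
          = (a:ℂ) * ((Fmap α)^[n] z - -1) + (b:ℂ) * ((Fmap α)^[n] w - -1) := by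
        have : ((a:ℂ) * (Fmap α)^[n] z + (b:ℂ) * (Fmap α)^[n] w - -1)
            = (a:ℂ) * (Fmap α)^[n] z + (b:ℂ) * (Fmap α)^[n] w + ((a:ℂ)+(b:ℂ)) * 1 := by
          rw [hab']; ring
        rw [this]; ring
      rw [hkey]; ring
    · have hwpos : 0 < ((Fmap α)^[n] w).im := hiff.2 hzpos
      have hUpos : 0 < (a • ((Fmap α)^[n] z) + b • ((Fmap α)^[n] w)).im := by
        rw [himU]; exact comb_pos ha hb hab hzpos hwpos
      rw [Fmap_eq_pos α hUpos.le, Fmap_eq_pos α hzpos.le, Fmap_eq_pos α hwpos.le]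
      rw [Complex.real_smul, Complex.real_smul, Complex.real_smul, Complex.real_smul]
      have hab' : (a : ℂ) + (b : ℂ) = 1 := by
        rw [← Complex.ofReal_add, hab]; simp
      have hkey : ((a:ℂ) * (Fmap α)^[n] z + (b:ℂ) * (Fmap α)^[n] w - 1)
          = (a:ℂ) * ((Fmap α)^[n] z - 1) + (b:ℂ) * ((Fmap α)^[n] w - 1) := by
        have : ((a:ℂ) * (Fmap α)^[n] z + (b:ℂ) * (Fmap α)^[n] w - 1)
            = (a:ℂ) * (Fmap α)^[n] z + (b:ℂ) * (Fmap α)^[n] w - ((a:ℂ)+(b:ℂ)) * 1 := by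
          rw [hab']; ring
        rw [this]; ring
      rw [hkey]; ring

lemma smul_add_im (a b : ℝ) (A B : ℂ) : (a • A + b • B).im = a * A.im + b * B.im := by
  simp [Complex.add_im, Complex.smul_im, smul_eq_mul]

/-- each connected component of the regular set equals the set of
    points of the regular set with the same itinerary; in particular it is
    convex. -/
theorem stmt18 (p q : ℕ) (hp : 0 < p) (hq : 0 < q) (hpq : Nat.gcd p q = 1)
    (α : ℝ) (hα : α = 2 * Real.pi * p / q)
    (V : Set ℂ) (z : ℂ) (hz : z ∈ regSet α)
    (hV : V = connectedComponentIn (regSet α) z) :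
    V = {w : ℂ | w ∈ regSet α ∧ ∀ n : ℕ,
        (0 < ((Fmap α)^[n] w).im ↔ 0 < ((Fmap α)^[n] z).im)} ∧
      Convex ℝ V := by
  subst hV
  have hE : connectedComponentIn (regSet α) z
      = {w : ℂ | w ∈ regSet α ∧ ∀ n : ℕ,
        (0 < ((Fmap α)^[n] w).im ↔ 0 < ((Fmap α)^[n] z).im)} := by
    apply Set.Subset.antisymm
    · intro w hw
      have hwreg : w ∈ regSet α := connectedComponentIn_subset _ _ hw
      refine ⟨hwreg, fun n => ?_⟩
      set U : Set ℂ := {x : ℂ | x ∈ regSet α ∧ 0 < ((Fmap α)^[n] x).im} with hU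
      set U' : Set ℂ := {x : ℂ | x ∈ regSet α ∧ ((Fmap α)^[n] x).im < 0} with hU'
      have hUopen : IsOpen U := by
        rw [Metric.isOpen_iff]
        rintro x ⟨hx, hxpos⟩
        obtain ⟨ε, hε, hloc⟩ := local_same hx
        exact ⟨ε, hε, fun y hy => ⟨(hloc y hy).1, ((hloc y hy).2 n).2 hxpos⟩⟩
      have hU'open : IsOpen U' := by
        rw [Metric.isOpen_iff]
        rintro x ⟨hx, hxneg⟩
        obtain ⟨ε, hε, hloc⟩ := local_same hx
        refine ⟨ε, hε, fun y hy => ⟨(hloc y hy).1, ?_⟩⟩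
        have hyne := reg_ne (hloc y hy).1 n
        have hiff := (hloc y hy).2 n
        rcases lt_or_gt_of_ne hyne with h | h
        · exact h
        · exact absurd (hiff.1 h) (by simp only [not_lt]; linarith)
      have hdisj : Disjoint U U' := by
        rw [Set.disjoint_left]
        rintro x ⟨_, h1⟩ ⟨_, h2⟩
        linarith
      have hcover : connectedComponentIn (regSet α) z ⊆ U ∪ U' := by
        intro x hx
        have hxreg := connectedComponentIn_subset _ _ hx
        rcases lt_or_gt_of_ne (reg_ne hxreg n) with h | h
        · exact Or.inr ⟨hxreg, h⟩
        · exact Or.inl ⟨hxreg, h⟩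
      have hzmem := mem_connectedComponentIn hz
      rcases lt_or_gt_of_ne (reg_ne hz n) with hzneg | hzpos
      · have hsub : connectedComponentIn (regSet α) z ⊆ U' :=
          IsPreconnected.subset_left_of_subset_union hU'open hUopen hdisj.symm
            (fun x hx => (hcover hx).symm) ⟨z, hzmem, ⟨hz, hzneg⟩⟩
            isPreconnected_connectedComponentIn
        have hwneg := (hsub hw).2
        constructor <;> intro h <;> linarith
      · have hsub : connectedComponentIn (regSet α) z ⊆ U :=
          IsPreconnected.subset_left_of_subset_union hUopen hU'open hdisj
            hcover ⟨z, hzmem, ⟨hz, hzpos⟩⟩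
            isPreconnected_connectedComponentIn
        have hwpos := (hsub hw).2
        constructor <;> intro _ <;> [exact hzpos; exact hwpos]
    · rintro w ⟨hwreg, hsame⟩
      obtain ⟨δz, hδz, hgz⟩ := gap_of_reg hz
      obtain ⟨δw, hδw, hgw⟩ := gap_of_reg hwreg
      have hzne := reg_ne hz
      have hwne := reg_ne hwreg
      have hseg : segment ℝ z w ⊆ regSet α := by
        rintro u ⟨a, b, ha, hb, hab, rfl⟩
        apply reg_of_gap (lt_min hδz hδw)
        intro n
        rw [iter_comb α z w hzne hwne hsame a b ha hb hab n, smul_add_im]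
        exact (real_comb_sign ha hb hab hδz hδw (hgz n) (hgw n) (hsame n).symm).1
      exact (convex_segment z w).isPreconnected.subset_connectedComponentIn
        (left_mem_segment ℝ z w) hseg (right_mem_segment ℝ z w)
  refine ⟨hE, ?_⟩
  rw [hE]
  intro w₁ h1 w₂ h2 a b ha hb hab
  obtain ⟨h1reg, h1s⟩ := h1
  obtain ⟨h2reg, h2s⟩ := h2
  have hs12 : ∀ n, (0 < ((Fmap α)^[n] w₂).im ↔ 0 < ((Fmap α)^[n] w₁).im) :=
    fun n => (h2s n).trans (h1s n).symm
  obtain ⟨δ₁, hδ₁, hg1⟩ := gap_of_reg h1reg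
  obtain ⟨δ₂, hδ₂, hg2⟩ := gap_of_reg h2reg
  have hcomb := iter_comb α w₁ w₂ (reg_ne h1reg) (reg_ne h2reg) hs12 a b ha hb hab
  refine ⟨?_, fun n => ?_⟩
  · apply reg_of_gap (lt_min hδ₁ hδ₂)
    intro n
    rw [hcomb n, smul_add_im]
    exact (real_comb_sign ha hb hab hδ₁ hδ₂ (hg1 n) (hg2 n) (hs12 n).symm).1
  · rw [hcomb n, smul_add_im]
    exact ((real_comb_sign ha hb hab hδ₁ hδ₂ (hg1 n) (hg2 n) (hs12 n).symm).2).trans (h1s n)
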